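/- Let A and S be formal power series in one variable x over ℝ satisfying the system A = (1 + A)·x·S and S = (1 + A)·(1 + x·S). Then the constant term of A is 0, the constant term of S is 1, A satisfies the quadratic equation 2·x·A² + (3x − 1)·A + x = 0, and S = 2·A + 1. -/

import Mathlib

/-- The system `A = (1+A)·x·S`, `S = (1+A)·(1+x·S)` for the generating functions
of dissections and of chains of dissections implies: `A` has constant term `0`,
`S` has constant term `1`, `A` satisfies `2xA² + (3x−1)A + x = 0`, and `S = 2A+1`.
All identities hold in `ℝ[[x]]`. -/
theorem dissection_generating_function_system (A S : PowerSeries ℝ)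
    (hA : A = (1 + A) * PowerSeries.X * S)
    (hS : S = (1 + A) * (1 + PowerSeries.X * S)) :
    PowerSeries.constantCoeff A = 0 ∧
    PowerSeries.constantCoeff S = 1 ∧
    2 * PowerSeries.X * A ^ 2 + (3 * PowerSeries.X - 1) * A + PowerSeries.X = 0 ∧
    S = 2 * A + 1 := by
  have hS2 : S = 2 * A + 1 := by
    have h := hS
    rw [mul_add, mul_one, ← mul_assoc, ← hA] at h
    linear_combination h
  have hq : 2 * PowerSeries.X * A ^ 2 + (3 * PowerSeries.X - 1) * A
      + PowerSeries.X = 0 := by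
    have h := hA
    rw [hS2] at h
    linear_combination -h
  have hc : PowerSeries.constantCoeff A = 0 := by
    have h := congrArg (PowerSeries.constantCoeff) hA
    simpa using h
  have hcS : PowerSeries.constantCoeff S = 1 := by
    have h := congrArg (PowerSeries.constantCoeff) hS2
    simpa [hc] using h
  exact ⟨hc, hcS, hq, hS2⟩
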